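/- For all positive integers a, b and every real number t, there exists a bijection π from {1, …, a} to {b+1, …, b+a} such that for every k ∈ {1, …, a}, the k-interval of t encloses the π(k)-interval of t; explicitly, ⌊kt⌋/k ≤ ⌊π(k)·t⌋/π(k) and (⌊π(k)·t⌋+1)/π(k) ≤ (⌊kt⌋+1)/k. -/

import Mathlib

/-- Cross-multiplied enclosure relation: the `k`-interval of `t` contains the `l`-interval. -/
def Encl (t : ℝ) (k l : ℕ) : Prop :=
  (l : ℤ) * ⌊(k : ℝ) * t⌋ ≤ (k : ℤ) * ⌊(l : ℝ) * t⌋ ∧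
  (k : ℤ) * (⌊(l : ℝ) * t⌋ + 1) ≤ (l : ℤ) * (⌊(k : ℝ) * t⌋ + 1)

lemma encl_refl (t : ℝ) (k : ℕ) : Encl t k k := ⟨le_refl _, le_refl _⟩

lemma encl_trans (t : ℝ) {k l m : ℕ} (hl : 1 ≤ l) (h1 : Encl t k l) (h2 : Encl t l m) :
    Encl t k m := by
  obtain ⟨a1, a2⟩ := h1
  obtain ⟨b1, b2⟩ := h2
  have hl' : (0 : ℤ) < (l : ℤ) := by exact_mod_cast hl
  constructor
  · have h : (l : ℤ) * ((m : ℤ) * ⌊(k : ℝ) * t⌋) ≤ (l : ℤ) * ((k : ℤ) * ⌊(m : ℝ) * t⌋) := by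
      nlinarith [mul_le_mul_of_nonneg_left a1 (by positivity : (0:ℤ) ≤ (m:ℤ)),
        mul_le_mul_of_nonneg_left b1 (by positivity : (0:ℤ) ≤ (k:ℤ))]
    exact le_of_mul_le_mul_left h hl'
  · have h : (l : ℤ) * ((k : ℤ) * (⌊(m : ℝ) * t⌋ + 1)) ≤ (l : ℤ) * ((m : ℤ) * (⌊(k : ℝ) * t⌋ + 1)) := by
      nlinarith [mul_le_mul_of_nonneg_left a2 (by positivity : (0:ℤ) ≤ (m:ℤ)),
        mul_le_mul_of_nonneg_left b2 (by positivity : (0:ℤ) ≤ (k:ℤ))]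
    exact le_of_mul_le_mul_left h hl'

/-- Mediant lemma: for positive `i, j`, either `i` or `j` encloses `i + j`. -/
lemma encl_add (t : ℝ) {i j : ℕ} (hi : 1 ≤ i) (hj : 1 ≤ j) :
    Encl t i (i + j) ∨ Encl t j (i + j) := by
  set Fi : ℤ := ⌊(i : ℝ) * t⌋ with hFi
  set Fj : ℤ := ⌊(j : ℝ) * t⌋ with hFj
  set F : ℤ := ⌊((i + j : ℕ) : ℝ) * t⌋ with hF
  have hi0 : (0 : ℝ) < (i : ℝ) := by exact_mod_cast hi
  have hj0 : (0 : ℝ) < (j : ℝ) := by exact_mod_cast hj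
  have hFi1 : (Fi : ℝ) ≤ (i : ℝ) * t := Int.floor_le _
  have hFi2 : (i : ℝ) * t < Fi + 1 := Int.lt_floor_add_one _
  have hFj1 : (Fj : ℝ) ≤ (j : ℝ) * t := Int.floor_le _
  have hFj2 : (j : ℝ) * t < Fj + 1 := Int.lt_floor_add_one _
  have hsplit : ((i + j : ℕ) : ℝ) * t = (i : ℝ) * t + (j : ℝ) * t := by push_cast; ring
  -- F = Fi + Fj or Fi + Fj + 1
  have hlow : Fi + Fj ≤ F := by
    rw [hF]
    apply Int.le_floor.mpr
    rw [hsplit]; push_cast; linarith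
  have hhigh : F ≤ Fi + Fj + 1 := by
    have h2 : F < Fi + Fj + 2 := by
      rw [hF]
      apply Int.floor_lt.mpr
      rw [hsplit]; push_cast; linarith
    omega
  -- the two always-true cross bounds
  have key1 : (j : ℤ) * Fi < (i : ℤ) * Fj + i := by
    have h1 : (j : ℝ) * Fi ≤ (j : ℝ) * ((i : ℝ) * t) :=
      mul_le_mul_of_nonneg_left hFi1 (le_of_lt hj0)
    have h2 : (i : ℝ) * ((j : ℝ) * t) < (i : ℝ) * (Fj + 1) :=
      mul_lt_mul_of_pos_left hFj2 hi0
    have h3 : ((j : ℤ) * Fi : ℝ) < (((i : ℤ) * Fj + i : ℤ) : ℝ) := by push_cast; nlinarith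
    exact_mod_cast h3
  have key2 : (i : ℤ) * Fj < (j : ℤ) * Fi + j := by
    have h1 : (i : ℝ) * Fj ≤ (i : ℝ) * ((j : ℝ) * t) :=
      mul_le_mul_of_nonneg_left hFj1 (le_of_lt hi0)
    have h2 : (j : ℝ) * ((i : ℝ) * t) < (j : ℝ) * (Fi + 1) :=
      mul_lt_mul_of_pos_left hFi2 hj0
    have h3 : ((i : ℤ) * Fj : ℝ) < (((j : ℤ) * Fi + j : ℤ) : ℝ) := by push_cast; nlinarith
    exact_mod_cast h3
  have hcase : F = Fi + Fj ∨ F = Fi + Fj + 1 := by omega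
  rcases hcase with hc | hc
  · rcases le_total ((i : ℤ) * Fj) ((j : ℤ) * Fi) with h | h
    · right
      refine ⟨?_, ?_⟩
      · show ((i + j : ℕ) : ℤ) * Fj ≤ (j : ℤ) * F
        rw [hc]; push_cast; nlinarith
      · show (j : ℤ) * (F + 1) ≤ ((i + j : ℕ) : ℤ) * (Fj + 1)
        rw [hc]; push_cast; nlinarith
    · left
      refine ⟨?_, ?_⟩
      · show ((i + j : ℕ) : ℤ) * Fi ≤ (i : ℤ) * F
        rw [hc]; push_cast; nlinarith
      · show (i : ℤ) * (F + 1) ≤ ((i + j : ℕ) : ℤ) * (Fi + 1)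
        rw [hc]; push_cast; nlinarith
  · rcases le_total ((i : ℤ) * Fj + i) ((j : ℤ) * Fi + j) with h | h
    · left
      refine ⟨?_, ?_⟩
      · show ((i + j : ℕ) : ℤ) * Fi ≤ (i : ℤ) * F
        rw [hc]; push_cast; nlinarith
      · show (i : ℤ) * (F + 1) ≤ ((i + j : ℕ) : ℤ) * (Fi + 1)
        rw [hc]; push_cast; nlinarith
    · right
      refine ⟨?_, ?_⟩
      · show ((i + j : ℕ) : ℤ) * Fj ≤ (j : ℤ) * F
        rw [hc]; push_cast; nlinarith
      · show (j : ℤ) * (F + 1) ≤ ((i + j : ℕ) : ℤ) * (Fj + 1)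
        rw [hc]; push_cast; nlinarith

/-- Everything nonzero in the additive closure of `S` is enclosed by some member of `S`. -/
lemma encl_closure (t : ℝ) (S : Set ℕ) {l : ℕ}
    (hl : l ∈ AddSubmonoid.closure S) : l = 0 ∨ ∃ k ∈ S, Encl t k l := by
  induction hl using AddSubmonoid.closure_induction with
  | mem x hx => exact Or.inr ⟨x, hx, encl_refl t x⟩
  | zero => exact Or.inl rfl
  | add x y hx hy ihx ihy =>
      rcases Nat.eq_zero_or_pos x with hx0 | hx1
      · subst hx0; simpa using ihy
      · rcases Nat.eq_zero_or_pos y with hy0 | hy1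
        · subst hy0; simpa using ihx
        · right
          rcases ihx with h | ⟨kx, hkx, hex⟩
          · omega
          rcases ihy with h | ⟨ky, hky, hey⟩
          · omega
          rcases encl_add t hx1 hy1 with hm | hm
          · exact ⟨kx, hkx, encl_trans t hx1 hex hm⟩
          · exact ⟨ky, hky, encl_trans t hy1 hey hm⟩

theorem stmt9 (a b : ℕ) (ha : 0 < a) (hb : 0 < b) (t : ℝ) :
    ∃ p : ℕ → ℕ, Set.BijOn p (Set.Icc 1 a) (Set.Icc (b + 1) (b + a)) ∧
      ∀ k ∈ Set.Icc 1 a,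
        (⌊(k : ℝ) * t⌋ : ℝ) / (k : ℝ) ≤ (⌊(p k : ℝ) * t⌋ : ℝ) / (p k : ℝ) ∧
        ((⌊(p k : ℝ) * t⌋ : ℝ) + 1) / (p k : ℝ) ≤ ((⌊(k : ℝ) * t⌋ : ℝ) + 1) / (k : ℝ) := by
  classical
  set A : Finset ℕ := Finset.Icc 1 a with hA
  set B : Finset ℕ := Finset.Icc (b + 1) (b + a) with hB
  -- the neighborhood function for Hall's theorem
  set r : {x // x ∈ A} → Finset ℕ := fun x => B.filter (fun l => Encl t x l) with hr
  -- Hall's condition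
  have hall : ∀ s : Finset {x // x ∈ A}, s.card ≤ (s.biUnion r).card := by
    intro s
    rcases s.eq_empty_or_nonempty with rfl | hs
    · simp
    set S : Finset ℕ := s.image Subtype.val with hS
    have hScard : S.card = s.card := Finset.card_image_of_injective _ Subtype.val_injective
    have hSpos : ∀ x ∈ S, 1 ≤ x := by
      intro x hx
      rw [hS] at hx
      obtain ⟨y, hy, rfl⟩ := Finset.mem_image.mp hx
      exact (Finset.mem_Icc.mp y.2).1
    have hSle : ∀ x ∈ S, x ≤ a := by
      intro x hx
      rw [hS] at hx
      obtain ⟨y, hy, rfl⟩ := Finset.mem_image.mp hx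
      exact (Finset.mem_Icc.mp y.2).2
    -- the set of closure elements ≤ b, with its max m
    let C : Finset ℕ := (Finset.range (b + 1)).filter
        (fun n => n ∈ AddSubmonoid.closure (S : Set ℕ))
    have hC0 : 0 ∈ C := Finset.mem_filter.mpr
      ⟨Finset.mem_range.mpr (by omega), by simpa using (AddSubmonoid.closure (S : Set ℕ)).zero_mem⟩
    have hCne : C.Nonempty := ⟨0, hC0⟩
    let m : ℕ := C.max' hCne
    have hmC : m ∈ C := C.max'_mem hCne
    have hmC' := Finset.mem_filter.mp hmC
    have hmB : m ≤ b := by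
      have := Finset.mem_range.mp hmC'.1
      omega
    have hmcl : m ∈ AddSubmonoid.closure (S : Set ℕ) := hmC'.2
    -- the injection x ↦ m + x from S into the biUnion
    have himg : S.image (fun x => m + x) ⊆ s.biUnion r := by
      intro l hl
      obtain ⟨x, hx, rfl⟩ := Finset.mem_image.mp hl
      have hxcl : x ∈ AddSubmonoid.closure (S : Set ℕ) :=
        AddSubmonoid.subset_closure (by exact_mod_cast hx)
      have hmxcl : m + x ∈ AddSubmonoid.closure (S : Set ℕ) :=
        AddSubmonoid.add_mem _ hmcl hxcl
      have hgt : b < m + x := by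
        by_contra hle
        push_neg at hle
        have hmem : m + x ∈ C := Finset.mem_filter.mpr
          ⟨Finset.mem_range.mpr (by omega), hmxcl⟩
        have := C.le_max' _ hmem
        have hx1 := hSpos x hx
        omega
      have hleB : m + x ≤ b + a := by
        have := hSle x hx
        omega
      obtain ⟨k, hkS, hke⟩ := (encl_closure t (S : Set ℕ) hmxcl).resolve_left
        (by have := hSpos x hx; omega)
      have hkS' : k ∈ S := by exact_mod_cast hkS
      rw [hS] at hkS'
      obtain ⟨y, hy, rfl⟩ := Finset.mem_image.mp hkS'
      apply Finset.mem_biUnion.mpr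
      refine ⟨y, hy, ?_⟩
      rw [hr, Finset.mem_filter, hB, Finset.mem_Icc]
      exact ⟨⟨by omega, hleB⟩, hke⟩
    have hcard2 : (S.image (fun x => m + x)).card = S.card :=
      Finset.card_image_of_injective _ (add_right_injective m)
    calc s.card = S.card := hScard.symm
      _ = (S.image (fun x => m + x)).card := hcard2.symm
      _ ≤ (s.biUnion r).card := Finset.card_le_card himg
  -- apply Hall's theorem
  obtain ⟨f, hfinj, hfr⟩ := (Finset.all_card_le_biUnion_card_iff_exists_injective r).mp hall
  have hfB : ∀ x, f x ∈ B := fun x => (Finset.mem_filter.mp (hfr x)).1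
  have hfE : ∀ x : {x // x ∈ A}, Encl t x (f x) := fun x => (Finset.mem_filter.mp (hfr x)).2
  -- f is surjective onto B by cardinality
  have hcardA : A.card = a := by rw [hA, Nat.card_Icc]; omega
  have hcardB : B.card = a := by rw [hB, Nat.card_Icc]; omega
  have himage : Finset.univ.image f = B := by
    apply Finset.eq_of_subset_of_card_le
    · intro l hl
      obtain ⟨x, _, rfl⟩ := Finset.mem_image.mp hl
      exact hfB x
    · rw [Finset.card_image_of_injective _ hfinj, hcardB]
      simp [hcardA]
  set p : ℕ → ℕ := fun k => if h : k ∈ A then f ⟨k, h⟩ else 0 with hp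
  have hicc : (Set.Icc 1 a : Set ℕ) = ↑A := by rw [hA, Finset.coe_Icc]
  have hicc2 : (Set.Icc (b + 1) (b + a) : Set ℕ) = ↑B := by rw [hB, Finset.coe_Icc]
  refine ⟨p, ?_, ?_⟩
  · rw [hicc, hicc2]
    refine ⟨?_, ?_, ?_⟩
    · intro k hk
      have hk' : k ∈ A := hk
      simp only [hp, dif_pos hk']
      exact_mod_cast hfB ⟨k, hk'⟩
    · intro k hk k' hk' heq
      have hkA : k ∈ A := hk
      have hkA' : k' ∈ A := hk'
      simp only [hp, dif_pos hkA, dif_pos hkA'] at heq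
      have := hfinj heq
      exact congrArg Subtype.val this
    · intro l hl
      have hlB : l ∈ B := hl
      rw [← himage] at hlB
      obtain ⟨x, _, rfl⟩ := Finset.mem_image.mp hlB
      refine ⟨x, x.2, ?_⟩
      simp only [hp, dif_pos x.2]
  · intro k hk
    rw [hicc] at hk
    have hkA : k ∈ A := hk
    have hk1 : 1 ≤ k := by
      rw [hA, Finset.mem_Icc] at hkA; exact hkA.1
    have hl1 : 1 ≤ p k := by
      have : p k ∈ B := by
        simp only [hp, dif_pos hkA]
        exact hfB ⟨k, hkA⟩
      rw [hB, Finset.mem_Icc] at this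
      omega
    have he : Encl t k (p k) := by
      simp only [hp, dif_pos hkA]
      exact hfE ⟨k, hkA⟩
    obtain ⟨he1, he2⟩ := he
    have hk0 : (0 : ℝ) < (k : ℝ) := by exact_mod_cast hk1
    have hl0 : (0 : ℝ) < (p k : ℝ) := by exact_mod_cast hl1
    constructor
    · rw [div_le_div_iff₀ hk0 hl0]
      have : ((p k : ℤ) * ⌊(k : ℝ) * t⌋ : ℝ) ≤ ((k : ℤ) * ⌊(p k : ℝ) * t⌋ : ℝ) := by
        exact_mod_cast he1
      push_cast at this ⊢
      linarith
    · rw [div_le_div_iff₀ hl0 hk0]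
      have : ((k : ℤ) * (⌊(p k : ℝ) * t⌋ + 1) : ℝ) ≤ ((p k : ℤ) * (⌊(k : ℝ) * t⌋ + 1) : ℝ) := by
        exact_mod_cast he2
      push_cast at this ⊢
      linarith
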